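/- Let F : ℝⁿ → ℝ ∪ {+∞} and G* : ℝᵐ → ℝ ∪ {+∞} be convex, lower semicontinuous and proper, let Λ be a real m × n matrix with full column rank (i.e. Λ is injective), and let r > 0. Suppose there exists a pair (u, σ) ∈ ℝⁿ × ℝᵐ satisfying the primal-dual extremality relations: −Λᵀσ ∈ ∂F(u) and σ ∈ ∂G*(Λu). Let (u⁰, q⁰, σ⁰) ∈ ℝⁿ × ℝᵐ × ℝᵐ and let (u^k, q^k, σ^k) be any sequence such that for every k: u^{k+1} is a minimizer over ℝⁿ of u ↦ F(u) + σ^k · Λu + (r/2)‖Λu − q^k‖²; q^{k+1} is a minimizer over ℝᵐ of q ↦ G*(q) − σ^k · q + (r/2)‖Λu^{k+1} − q‖²; and σ^{k+1} = σ^k + r(Λu^{k+1} − q^{k+1}). Then there exists a pair (ū, σ̄) ∈ ℝⁿ × ℝᵐ satisfying the extremality relations −Λᵀσ̄ ∈ ∂F(ū) and σ̄ ∈ ∂G*(Λū) such that u^k → ū, q^k → Λū and σ^k → σ̄ as k → +∞. -/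

import Mathlib

open Filter

/-- Euclidean dot product on `Fin k → ℝ`. -/
def dotR {k : ℕ} (x y : Fin k → ℝ) : ℝ := ∑ i, x i * y i

/-- `Φ` is convex as an extended-real-valued function. -/
def ERealConvex {k : ℕ} (Φ : (Fin k → ℝ) → EReal) : Prop :=
  ∀ x y : Fin k → ℝ, ∀ a b : ℝ, 0 ≤ a → 0 ≤ b → a + b = 1 →
    Φ (a • x + b • y) ≤ (a : EReal) * Φ x + (b : EReal) * Φ y

/-- `Φ` is proper: it never takes the value `−∞` and is finite somewhere. -/
def ERealProper {k : ℕ} (Φ : (Fin k → ℝ) → EReal) : Prop :=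
  (∀ x, Φ x ≠ ⊥) ∧ ∃ x, Φ x ≠ ⊤

/-- `ξ ∈ ∂Φ(x)`: `Φ(x)` is finite and `Φ(y) ≥ Φ(x) + ξ·(y − x)` for all `y`. -/
def InSubdiff {k : ℕ} (Φ : (Fin k → ℝ) → EReal) (x ξ : Fin k → ℝ) : Prop :=
  Φ x ≠ ⊤ ∧ Φ x ≠ ⊥ ∧ ∀ y, Φ x + ((dotR ξ (y - x) : ℝ) : EReal) ≤ Φ y

/- ### Auxiliary lemmas on `dotR` -/

lemma dotR_nonneg {k : ℕ} (x : Fin k → ℝ) : 0 ≤ dotR x x :=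
  Finset.sum_nonneg fun _ _ => mul_self_nonneg _

lemma coord_sq_le {k : ℕ} (x : Fin k → ℝ) (i : Fin k) : x i * x i ≤ dotR x x :=
  Finset.single_le_sum (f := fun j => x j * x j) (fun _ _ => mul_self_nonneg _)
    (Finset.mem_univ i)

lemma norm_le_sqrt_dotR {k : ℕ} (x : Fin k → ℝ) : ‖x‖ ≤ Real.sqrt (dotR x x) := by
  rw [pi_norm_le_iff_of_nonneg (Real.sqrt_nonneg _)]
  intro i
  rw [Real.norm_eq_abs, ← Real.sqrt_mul_self_eq_abs]
  exact Real.sqrt_le_sqrt (coord_sq_le x i)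

lemma dotR_neg_left {k : ℕ} (x y : Fin k → ℝ) : dotR (-x) y = -(dotR x y) := by
  simp [dotR, Finset.sum_neg_distrib]

lemma dotR_smul_left {k : ℕ} (c : ℝ) (x y : Fin k → ℝ) : dotR (c • x) y = c * dotR x y := by
  simp [dotR, Finset.mul_sum, mul_assoc]

lemma dotR_flip {k : ℕ} (v w : Fin k → ℝ) : dotR (v - w) (v - w) = dotR (w - v) (w - v) := by
  simp only [dotR]
  exact Finset.sum_congr rfl fun i _ => by simp only [Pi.sub_apply]; ring

lemma dotR_expand_add {k : ℕ} (a d : Fin k → ℝ) :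
    dotR (a + d) (a + d) - dotR a a - dotR d d - 2 * dotR a d = 0 := by
  simp only [dotR, Pi.add_apply, Finset.mul_sum, ← Finset.sum_add_distrib,
    ← Finset.sum_sub_distrib]
  exact Finset.sum_eq_zero fun i _ => by ring

lemma tendsto_dotR {k : ℕ} {x y : ℕ → Fin k → ℝ} {a b : Fin k → ℝ}
    (hx : Tendsto x atTop (nhds a)) (hy : Tendsto y atTop (nhds b)) :
    Tendsto (fun j => dotR (x j) (y j)) atTop (nhds (dotR a b)) := by
  have hx' := fun i => tendsto_pi_nhds.mp hx i
  have hy' := fun i => tendsto_pi_nhds.mp hy i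
  unfold dotR
  exact tendsto_finset_sum _ fun i _ => (hx' i).mul (hy' i)

lemma tendsto_of_dotR_self {k : ℕ} {v : ℕ → Fin k → ℝ} {w : Fin k → ℝ}
    (h : Tendsto (fun j => dotR (v j - w) (v j - w)) atTop (nhds 0)) :
    Tendsto v atTop (nhds w) := by
  rw [tendsto_pi_nhds]
  intro i
  have hs : Tendsto (fun j => Real.sqrt (dotR (v j - w) (v j - w))) atTop (nhds 0) := by
    have := (Real.continuous_sqrt.tendsto 0).comp h
    simpa [Function.comp_def] using this
  have h1 : ∀ j, |v j i - w i| ≤ Real.sqrt (dotR (v j - w) (v j - w)) := by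
    intro j
    rw [← Real.sqrt_mul_self_eq_abs]
    exact Real.sqrt_le_sqrt (by simpa using coord_sq_le (v j - w) i)
  have habs : Tendsto (fun j => |v j i - w i|) atTop (nhds 0) :=
    squeeze_zero (fun j => abs_nonneg _) h1 hs
  have h2 : Tendsto (fun j => v j i - w i) atTop (nhds 0) :=
    (tendsto_zero_iff_abs_tendsto_zero _).mpr habs
  have h3 := h2.add_const (w i)
  simpa using h3

lemma dotR_trans {n m : ℕ} (Λ : Matrix (Fin m) (Fin n) ℝ) (v : Fin m → ℝ) (z : Fin n → ℝ) :
    dotR (Λ.transpose.mulVec v) z = dotR v (Λ.mulVec z) := by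
  simp only [dotR, Matrix.mulVec, dotProduct, Matrix.transpose_apply, Finset.sum_mul,
    Finset.mul_sum]
  rw [Finset.sum_comm]
  exact Finset.sum_congr rfl fun i _ => Finset.sum_congr rfl fun j _ => by ring

/- ### EReal helpers -/

lemma finite_of_min {p : ℕ} (Φ : (Fin p → ℝ) → EReal) {x y0 : Fin p → ℝ} {c c0 : ℝ}
    (h : Φ x + (c : EReal) ≤ Φ y0 + (c0 : EReal)) (h0 : Φ y0 ≠ ⊤) (hb : Φ y0 ≠ ⊥) :
    Φ x ≠ ⊤ := by
  intro hx
  rw [hx, EReal.top_add_coe] at h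
  obtain ⟨g, hg⟩ : ∃ g : ℝ, Φ y0 = g := ⟨_, (EReal.coe_toReal h0 hb).symm⟩
  rw [hg, ← EReal.coe_add, top_le_iff] at h
  exact EReal.coe_ne_top _ h

/-- Monotonicity of the subdifferential. -/
lemma sub_mono {p : ℕ} (Φ : (Fin p → ℝ) → EReal) (x1 ξ1 x2 ξ2 : Fin p → ℝ)
    (h1 : InSubdiff Φ x1 ξ1) (h2 : InSubdiff Φ x2 ξ2) : 0 ≤ dotR (ξ1 - ξ2) (x1 - x2) := by
  obtain ⟨f1, hf1⟩ : ∃ g : ℝ, Φ x1 = g := ⟨_, (EReal.coe_toReal h1.1 h1.2.1).symm⟩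
  obtain ⟨f2, hf2⟩ : ∃ g : ℝ, Φ x2 = g := ⟨_, (EReal.coe_toReal h2.1 h2.2.1).symm⟩
  have e1 := h1.2.2 x2
  have e2 := h2.2.2 x1
  rw [hf1, hf2, ← EReal.coe_add, EReal.coe_le_coe_iff] at e1 e2
  have key : dotR (ξ1 - ξ2) (x1 - x2)
      = -(dotR ξ1 (x2 - x1)) - dotR ξ2 (x1 - x2) := by
    simp only [dotR, Pi.sub_apply, ← Finset.sum_add_distrib, ← Finset.sum_sub_distrib,
      ← Finset.sum_neg_distrib]
    exact Finset.sum_congr rfl fun i _ => by ring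
  rw [key]; linarith

/-- From minimization of `Φ + smooth quadratic` we get a subgradient inequality. -/
lemma key_min {p m' : ℕ} (Φ : (Fin p → ℝ) → EReal) (hconv : ERealConvex Φ)
    (hbot : ∀ z, Φ z ≠ ⊥) (T : (Fin p → ℝ) → (Fin m' → ℝ))
    (hTadd : ∀ x y, T (x + y) = T x + T y) (hTsmul : ∀ (c : ℝ) x, T (c • x) = c • T x)
    (s b : Fin m' → ℝ) (r : ℝ)
    (x : Fin p → ℝ) (hfin : Φ x ≠ ⊤)
    (hmin : ∀ y, Φ x + ((dotR s (T x) + r / 2 * dotR (T x - b) (T x - b) : ℝ) : EReal)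
        ≤ Φ y + ((dotR s (T y) + r / 2 * dotR (T y - b) (T y - b) : ℝ) : EReal)) :
    ∀ y, Φ x + ((-(dotR (s + r • (T x - b)) (T y - T x)) : ℝ) : EReal) ≤ Φ y := by
  have hTsub : ∀ a c, T (a - c) = T a - T c := by
    intro a c
    have := hTadd (a - c) c
    rw [sub_add_cancel] at this
    rw [eq_sub_of_add_eq this.symm]
  intro y
  by_cases hy : Φ y = ⊤
  · rw [hy]; exact le_top
  obtain ⟨fx, hfx⟩ : ∃ g : ℝ, Φ x = g := ⟨_, (EReal.coe_toReal hfin (hbot x)).symm⟩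
  obtain ⟨fy, hfy⟩ : ∃ g : ℝ, Φ y = g := ⟨_, (EReal.coe_toReal hy (hbot y)).symm⟩
  set D := dotR (s + r • (T x - b)) (T y - T x) with hD
  set C := r / 2 * dotR (T y - T x) (T y - T x) with hC
  have hstep : ∀ t : ℝ, 0 < t → t ≤ 1 → fx ≤ fy + D + t * C := by
    intro t ht0 ht1
    set z := x + t • (y - x) with hz
    have hzc : z = (1 - t) • x + t • y := by rw [hz]; module
    have hTz : T z = T x + t • (T y - T x) := by
      rw [hz, hTadd, hTsmul, hTsub]
    have hc := hconv x y (1 - t) t (by linarith) ht0.le (by ring)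
    rw [← hzc, hfx, hfy] at hc
    have hc' : Φ z ≤ (((1 - t) * fx + t * fy : ℝ) : EReal) := by
      push_cast
      exact hc
    have hm := hmin z
    have hchain0 : Φ x + ((dotR s (T x) + r / 2 * dotR (T x - b) (T x - b) : ℝ) : EReal)
        ≤ (((1 - t) * fx + t * fy : ℝ) : EReal)
          + ((dotR s (T z) + r / 2 * dotR (T z - b) (T z - b) : ℝ) : EReal) :=
      le_trans hm (add_le_add_left hc' _)
    rw [hfx] at hchain0
    have hchain : fx + (dotR s (T x) + r / 2 * dotR (T x - b) (T x - b))
        ≤ (1 - t) * fx + t * fy + (dotR s (T z) + r / 2 * dotR (T z - b) (T z - b)) := by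
      exact_mod_cast hchain0
    have hφz : dotR s (T z) + r / 2 * dotR (T z - b) (T z - b)
        = (dotR s (T x) + r / 2 * dotR (T x - b) (T x - b)) + t * D + t * t * C := by
      rw [hTz, hD, hC]
      simp only [dotR, Pi.add_apply, Pi.sub_apply, Pi.smul_apply, smul_eq_mul, Finset.mul_sum,
        ← Finset.sum_add_distrib, ← Finset.sum_sub_distrib]
      exact Finset.sum_congr rfl fun i _ => by ring
    rw [hφz] at hchain
    have ht : t * fx ≤ t * (fy + D + t * C) := by nlinarith
    exact le_of_mul_le_mul_left ht ht0
  have hlim : Tendsto (fun j : ℕ => fy + D + (1 / (j + 1 : ℝ)) * C) atTop (nhds (fy + D)) := by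
    have h0 := tendsto_one_div_add_atTop_nhds_zero_nat (𝕜 := ℝ)
    have := (tendsto_const_nhds (x := fy + D) (f := atTop (α := ℕ))).add (h0.mul_const C)
    simpa using this
  have hfxle : fx ≤ fy + D :=
    ge_of_tendsto' hlim fun j => hstep (1 / (j + 1 : ℝ))
      (by positivity) (by rw [div_le_one (by positivity)]; linarith [Nat.cast_nonneg (α := ℝ) j])
  rw [hfx, hfy, ← EReal.coe_add, EReal.coe_le_coe_iff]
  linarith

/-- Passage to the limit in the subdifferential relation, via lower semicontinuity. -/
lemma limit_sub {p : ℕ} (Φ : (Fin p → ℝ) → EReal) (hlsc : LowerSemicontinuous Φ)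
    (hbot : ∀ z, Φ z ≠ ⊥) (hfin : ∃ z, Φ z ≠ ⊤)
    (x ξ : ℕ → Fin p → ℝ) (xb ξb : Fin p → ℝ)
    (hx : Tendsto x atTop (nhds xb)) (hξ : Tendsto ξ atTop (nhds ξb))
    (hmem : ∀ j, InSubdiff Φ (x j) (ξ j)) : InSubdiff Φ xb ξb := by
  have claim : ∀ y : Fin p → ℝ, ∀ c : ℝ, (c : EReal) < Φ xb →
      ((c + dotR ξb (y - xb) : ℝ) : EReal) ≤ Φ y := by
    intro y c hc
    set d := dotR ξb (y - xb) with hd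
    have hdj : Tendsto (fun j => dotR (ξ j) (y - x j)) atTop (nhds d) :=
      tendsto_dotR hξ (tendsto_const_nhds.sub hx)
    have hev1 : ∀ᶠ j in atTop, (c : EReal) < Φ (x j) :=
      hx.eventually (hlsc xb (c : EReal) hc)
    have hfinal : ∀ ε : ℝ, 0 < ε → ((c + d - ε : ℝ) : EReal) ≤ Φ y := by
      intro ε hε
      have hev2 : ∀ᶠ j in atTop, d - ε < dotR (ξ j) (y - x j) :=
        hdj (Ioi_mem_nhds (by linarith))
      obtain ⟨j, hj1, hj2⟩ := (hev1.and hev2).exists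
      obtain ⟨fj, hfj⟩ : ∃ g : ℝ, Φ (x j) = g :=
        ⟨_, (EReal.coe_toReal (hmem j).1 (hmem j).2.1).symm⟩
      rw [hfj, EReal.coe_lt_coe_iff] at hj1
      have h3 := (hmem j).2.2 y
      rw [hfj, ← EReal.coe_add] at h3
      calc ((c + d - ε : ℝ) : EReal) ≤ ((fj + dotR (ξ j) (y - x j) : ℝ) : EReal) := by
            rw [EReal.coe_le_coe_iff]; linarith
        _ ≤ Φ y := h3
    by_cases hy : Φ y = ⊤
    · rw [hy]; exact le_top
    obtain ⟨g, hg⟩ : ∃ g : ℝ, Φ y = g := ⟨_, (EReal.coe_toReal hy (hbot y)).symm⟩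
    rw [hg, EReal.coe_le_coe_iff]
    by_contra hcon
    push_neg at hcon
    have := hfinal ((c + d - g)/2) (by linarith)
    rw [hg, EReal.coe_le_coe_iff] at this
    linarith
  obtain ⟨z, hz⟩ := hfin
  obtain ⟨gz, hgz⟩ : ∃ g : ℝ, Φ z = g := ⟨_, (EReal.coe_toReal hz (hbot z)).symm⟩
  have hxbtop : Φ xb ≠ ⊤ := by
    intro htop
    have h1 := claim z (gz - dotR ξb (z - xb) + 1) (by rw [htop]; exact EReal.coe_lt_top _)
    rw [hgz, EReal.coe_le_coe_iff] at h1
    linarith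
  refine ⟨hxbtop, hbot xb, fun y => ?_⟩
  obtain ⟨f, hf⟩ : ∃ g : ℝ, Φ xb = g := ⟨_, (EReal.coe_toReal hxbtop (hbot xb)).symm⟩
  by_cases hy : Φ y = ⊤
  · rw [hy]; exact le_top
  obtain ⟨g, hg⟩ : ∃ g : ℝ, Φ y = g := ⟨_, (EReal.coe_toReal hy (hbot y)).symm⟩
  rw [hf, hg, ← EReal.coe_add, EReal.coe_le_coe_iff]
  by_contra hcon
  push_neg at hcon
  obtain ⟨c, hc1, hc2⟩ := exists_between (show g - dotR ξb (y - xb) < f by linarith)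
  have := claim y c (by rw [hf, EReal.coe_lt_coe_iff]; exact hc2)
  rw [hg, EReal.coe_le_coe_iff] at this
  linarith

/-- Algebraic core of the Lyapunov estimate for ALG2. -/
lemma lyap_core {m : ℕ} (r : ℝ) (hr : 0 ≤ r) (s a b b0 : Fin m → ℝ)
    (hA : dotR (s + r • (a - b0)) a ≤ 0) (hB : 0 ≤ dotR (s + r • (a - b)) b) :
    dotR (s + r • (a - b)) (s + r • (a - b)) + r^2 * dotR b b + r^2 * dotR (a - b0) (a - b0)
      ≤ dotR s s + r^2 * dotR b0 b0 := by
  have hexp : dotR (s + r • (a - b)) (s + r • (a - b)) + r^2 * dotR b b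
      + r^2 * dotR (a - b0) (a - b0) - (dotR s s + r^2 * dotR b0 b0)
      - 2*r*(dotR (s + r • (a - b0)) a - dotR (s + r • (a - b)) b) = 0 := by
    simp only [dotR, Pi.add_apply, Pi.sub_apply, Pi.smul_apply, smul_eq_mul, Finset.mul_sum,
      ← Finset.sum_add_distrib, ← Finset.sum_sub_distrib]
    exact Finset.sum_eq_zero fun i _ => by ring
  nlinarith [mul_nonneg hr (neg_nonneg.mpr hA), mul_nonneg hr hB]

/-- One-step Lyapunov inequality for ALG2, relative to any extremal pair. -/
lemma lyap_step {n m : ℕ} (F : (Fin n → ℝ) → EReal) (Gs : (Fin m → ℝ) → EReal)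
    (Λ : Matrix (Fin m) (Fin n) ℝ) (r : ℝ) (hr : 0 < r)
    (u : ℕ → Fin n → ℝ) (q σ : ℕ → Fin m → ℝ)
    (hσ : ∀ k : ℕ, σ (k + 1) = σ k + r • (Λ.mulVec (u (k + 1)) - q (k + 1)))
    (usr : Fin n → ℝ) (σsr : Fin m → ℝ)
    (hFs : InSubdiff F usr (-(Λ.transpose.mulVec σsr)))
    (hGs : InSubdiff Gs (Λ.mulVec usr) σsr)
    (hFu : ∀ k : ℕ, InSubdiff F (u (k+1))
      (-(Λ.transpose.mulVec (σ k + r • (Λ.mulVec (u (k+1)) - q k)))))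
    (hGq : ∀ k : ℕ, InSubdiff Gs (q (k+1)) (σ (k+1))) (k : ℕ) :
    dotR (σ (k+1) - σsr) (σ (k+1) - σsr)
      + r^2 * dotR (q (k+1) - Λ.mulVec usr) (q (k+1) - Λ.mulVec usr)
      + r^2 * dotR (Λ.mulVec (u (k+1)) - q k) (Λ.mulVec (u (k+1)) - q k)
    ≤ dotR (σ k - σsr) (σ k - σsr) + r^2 * dotR (q k - Λ.mulVec usr) (q k - Λ.mulVec usr) := by
  have eσ : σ (k+1) - σsr = (σ k - σsr) + r • ((Λ.mulVec (u (k+1)) - Λ.mulVec usr)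
      - (q (k+1) - Λ.mulVec usr)) := by
    rw [hσ k]; module
  have e3 : Λ.mulVec (u (k+1)) - q k = (Λ.mulVec (u (k+1)) - Λ.mulVec usr)
      - (q k - Λ.mulVec usr) := by module
  have hmono := sub_mono F (u (k+1)) _ usr _ (hFu k) hFs
  have e1 : -(Λ.transpose.mulVec (σ k + r • (Λ.mulVec (u (k+1)) - q k)))
      - -(Λ.transpose.mulVec σsr)
      = Λ.transpose.mulVec (σsr - (σ k + r • (Λ.mulVec (u (k+1)) - q k))) := by
    rw [Matrix.mulVec_sub]; module
  rw [e1, dotR_trans, Matrix.mulVec_sub] at hmono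
  have e2 : σsr - (σ k + r • (Λ.mulVec (u (k+1)) - q k))
      = -((σ k - σsr) + r • ((Λ.mulVec (u (k+1)) - Λ.mulVec usr) - (q k - Λ.mulVec usr))) := by
    module
  rw [e2, dotR_neg_left] at hmono
  have hA : dotR ((σ k - σsr) + r • ((Λ.mulVec (u (k+1)) - Λ.mulVec usr)
      - (q k - Λ.mulVec usr))) (Λ.mulVec (u (k+1)) - Λ.mulVec usr) ≤ 0 := by linarith
  have hmB := sub_mono Gs (q (k+1)) (σ (k+1)) (Λ.mulVec usr) σsr (hGq k) hGs
  rw [eσ] at hmB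
  rw [eσ, e3]
  exact lyap_core r hr.le _ _ _ _ hA hmB
lemma dotR_zero {k : ℕ} : dotR (0 : Fin k → ℝ) 0 = 0 := by simp [dotR]

/-- convergence of the augmented Lagrangian algorithm ALG2. -/
theorem stmt_6 {n m : ℕ}
    (F : (Fin n → ℝ) → EReal) (Gs : (Fin m → ℝ) → EReal)
    (hFconv : ERealConvex F) (hGconv : ERealConvex Gs)
    (hFlsc : LowerSemicontinuous F) (hGlsc : LowerSemicontinuous Gs)
    (hFproper : ERealProper F) (hGproper : ERealProper Gs)
    (Λ : Matrix (Fin m) (Fin n) ℝ) (hΛ : Function.Injective Λ.mulVec)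
    (r : ℝ) (hr : 0 < r)
    (hexist : ∃ us : (Fin n → ℝ) × (Fin m → ℝ),
      InSubdiff F us.1 (-(Λ.transpose.mulVec us.2)) ∧
      InSubdiff Gs (Λ.mulVec us.1) us.2)
    (u : ℕ → Fin n → ℝ) (q σ : ℕ → Fin m → ℝ)
    (hu : ∀ k : ℕ, ∀ u' : Fin n → ℝ,
      F (u (k + 1)) + ((dotR (σ k) (Λ.mulVec (u (k + 1))) +
          r / 2 * dotR (Λ.mulVec (u (k + 1)) - q k) (Λ.mulVec (u (k + 1)) - q k) : ℝ) : EReal) ≤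
        F u' + ((dotR (σ k) (Λ.mulVec u') +
          r / 2 * dotR (Λ.mulVec u' - q k) (Λ.mulVec u' - q k) : ℝ) : EReal))
    (hq : ∀ k : ℕ, ∀ q' : Fin m → ℝ,
      Gs (q (k + 1)) + ((-(dotR (σ k) (q (k + 1))) +
          r / 2 * dotR (Λ.mulVec (u (k + 1)) - q (k + 1)) (Λ.mulVec (u (k + 1)) - q (k + 1)) : ℝ) : EReal) ≤
        Gs q' + ((-(dotR (σ k) q') +
          r / 2 * dotR (Λ.mulVec (u (k + 1)) - q') (Λ.mulVec (u (k + 1)) - q') : ℝ) : EReal))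
    (hσ : ∀ k : ℕ, σ (k + 1) = σ k + r • (Λ.mulVec (u (k + 1)) - q (k + 1))) :
    ∃ ubar : Fin n → ℝ, ∃ σbar : Fin m → ℝ,
      InSubdiff F ubar (-(Λ.transpose.mulVec σbar)) ∧
      InSubdiff Gs (Λ.mulVec ubar) σbar ∧
      Tendsto u atTop (nhds ubar) ∧
      Tendsto q atTop (nhds (Λ.mulVec ubar)) ∧
      Tendsto σ atTop (nhds σbar) := by
  obtain ⟨⟨us, σs⟩, hFs, hGs⟩ := hexist
  have hr2 : (0:ℝ) < r^2 := by positivity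
  have hTadd : ∀ x y : Fin n → ℝ, Λ.mulVec (x + y) = Λ.mulVec x + Λ.mulVec y :=
    fun x y => Matrix.mulVec_add Λ x y
  have hTsmul : ∀ (c : ℝ) (x : Fin n → ℝ), Λ.mulVec (c • x) = c • Λ.mulVec x :=
    fun c x => Matrix.mulVec_smul Λ c x
  -- per-step subdifferential relations
  have hFu : ∀ k : ℕ, InSubdiff F (u (k+1))
      (-(Λ.transpose.mulVec (σ k + r • (Λ.mulVec (u (k+1)) - q k)))) := by
    intro k
    have hfinF : F (u (k+1)) ≠ ⊤ := finite_of_min F (hu k us) hFs.1 hFs.2.1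
    have hkm := key_min F hFconv hFproper.1 Λ.mulVec hTadd hTsmul (σ k) (q k) r
      (u (k+1)) hfinF (hu k)
    refine ⟨hfinF, hFproper.1 _, fun y => ?_⟩
    have h2 := hkm y
    have e : dotR (-(Λ.transpose.mulVec (σ k + r • (Λ.mulVec (u (k+1)) - q k)))) (y - u (k+1))
        = -(dotR (σ k + r • (Λ.mulVec (u (k+1)) - q k)) (Λ.mulVec y - Λ.mulVec (u (k+1)))) := by
      rw [dotR_neg_left, dotR_trans, Matrix.mulVec_sub]
    rw [e]
    exact h2
  have hGq : ∀ k : ℕ, InSubdiff Gs (q (k+1)) (σ (k+1)) := by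
    intro k
    have hfinG : Gs (q (k+1)) ≠ ⊤ := finite_of_min Gs (hq k (Λ.mulVec us)) hGs.1 hGs.2.1
    have eq1 : ∀ z : Fin m → ℝ, dotR (-(σ k)) z
        + r / 2 * dotR (z - Λ.mulVec (u (k+1))) (z - Λ.mulVec (u (k+1)))
        = -(dotR (σ k) z)
          + r / 2 * dotR (Λ.mulVec (u (k+1)) - z) (Λ.mulVec (u (k+1)) - z) := by
      intro z; rw [dotR_neg_left, dotR_flip]
    have hmin' : ∀ y, Gs (q (k+1)) + ((dotR (-(σ k)) (q (k+1))
        + r / 2 * dotR (q (k+1) - Λ.mulVec (u (k+1))) (q (k+1) - Λ.mulVec (u (k+1))) : ℝ) : EReal)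
        ≤ Gs y + ((dotR (-(σ k)) y
          + r / 2 * dotR (y - Λ.mulVec (u (k+1))) (y - Λ.mulVec (u (k+1))) : ℝ) : EReal) := by
      intro y; rw [eq1, eq1]; exact hq k y
    have hkm := key_min Gs hGconv hGproper.1 (fun v => v) (fun _ _ => rfl) (fun _ _ => rfl)
      (-(σ k)) (Λ.mulVec (u (k+1))) r (q (k+1)) hfinG hmin'
    refine ⟨hfinG, hGproper.1 _, fun y => ?_⟩
    have h2 := hkm y
    have e : -(σ k) + r • (q (k+1) - Λ.mulVec (u (k+1))) = -(σ (k+1)) := by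
      rw [hσ k]; module
    rw [e, dotR_neg_left, neg_neg] at h2
    exact h2
  -- Lyapunov functional w.r.t. (us, σs)
  set L : ℕ → ℝ := fun k => dotR (σ k - σs) (σ k - σs)
      + r^2 * dotR (q k - Λ.mulVec us) (q k - Λ.mulVec us) with hLdef
  have hstep : ∀ k, L (k+1)
      + r^2 * dotR (Λ.mulVec (u (k+1)) - q k) (Λ.mulVec (u (k+1)) - q k) ≤ L k := by
    intro k
    have h := lyap_step F Gs Λ r hr u q σ hσ us σs hFs hGs hFu hGq k
    simp only [hLdef]
    linarith
  have hLnn : ∀ k, 0 ≤ L k := fun k =>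
    add_nonneg (dotR_nonneg _) (mul_nonneg (sq_nonneg r) (dotR_nonneg _))
  have hmonoL : ∀ k, L (k+1) ≤ L k := fun k => by
    have h := hstep k
    have h2 := mul_nonneg (sq_nonneg r) (dotR_nonneg (Λ.mulVec (u (k+1)) - q k))
    linarith
  have hanti : Antitone L := antitone_nat_of_succ_le hmonoL
  have hbdd : BddBelow (Set.range L) := ⟨0, by rintro x ⟨k, rfl⟩; exact hLnn k⟩
  have hLtend : Tendsto L atTop (nhds (⨅ k, L k)) := tendsto_atTop_ciInf hanti hbdd
  have hLtend1 : Tendsto (fun k => L (k+1)) atTop (nhds (⨅ k, L k)) :=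
    (tendsto_add_atTop_iff_nat 1).mpr hLtend
  have hEbound : ∀ k, dotR (Λ.mulVec (u (k+1)) - q k) (Λ.mulVec (u (k+1)) - q k)
      ≤ (L k - L (k+1)) / r^2 := by
    intro k
    rw [le_div_iff₀ hr2]
    have h := hstep k
    linarith
  have hEaux : Tendsto (fun k => (L k - L (k+1)) / r^2) atTop (nhds 0) := by
    have := (hLtend.sub hLtend1).div_const (r^2)
    simpa using this
  have hEtend : Tendsto (fun k => dotR (Λ.mulVec (u (k+1)) - q k)
      (Λ.mulVec (u (k+1)) - q k)) atTop (nhds 0) :=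
    squeeze_zero (fun k => dotR_nonneg _) hEbound hEaux
  have hEvec : Tendsto (fun k => Λ.mulVec (u (k+1)) - q k) atTop (nhds 0) :=
    tendsto_of_dotR_self (by simpa using hEtend)
  -- consecutive monotonicity
  have hcons : ∀ k : ℕ, 0 ≤ dotR (Λ.mulVec (u (k+1+1)) - q (k+1+1)) (q (k+1+1) - q (k+1)) := by
    intro k
    have h0 := sub_mono Gs (q (k+1+1)) (σ (k+1+1)) (q (k+1)) (σ (k+1)) (hGq (k+1)) (hGq k)
    have e : σ (k+1+1) - σ (k+1) = r • (Λ.mulVec (u (k+1+1)) - q (k+1+1)) := by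
      rw [hσ (k+1)]; module
    rw [e, dotR_smul_left] at h0
    nlinarith [h0, hr]
  have hEshift : Tendsto (fun k => dotR (Λ.mulVec (u (k+1+1)) - q (k+1))
      (Λ.mulVec (u (k+1+1)) - q (k+1))) atTop (nhds 0) :=
    (tendsto_add_atTop_iff_nat 1).mpr hEtend
  have hbound2 : ∀ k, dotR (Λ.mulVec (u (k+1+1)) - q (k+1+1)) (Λ.mulVec (u (k+1+1)) - q (k+1+1))
      ≤ dotR (Λ.mulVec (u (k+1+1)) - q (k+1)) (Λ.mulVec (u (k+1+1)) - q (k+1)) := by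
    intro k
    have hid := dotR_expand_add (Λ.mulVec (u (k+1+1)) - q (k+1+1)) (q (k+1+1) - q (k+1))
    have he : (Λ.mulVec (u (k+1+1)) - q (k+1+1)) + (q (k+1+1) - q (k+1))
        = Λ.mulVec (u (k+1+1)) - q (k+1) := by module
    rw [he] at hid
    have hc := hcons k
    have hd := dotR_nonneg (q (k+1+1) - q (k+1))
    linarith
  have hbound3 : ∀ k, dotR (q (k+1+1) - q (k+1)) (q (k+1+1) - q (k+1))
      ≤ dotR (Λ.mulVec (u (k+1+1)) - q (k+1)) (Λ.mulVec (u (k+1+1)) - q (k+1)) := by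
    intro k
    have hid := dotR_expand_add (Λ.mulVec (u (k+1+1)) - q (k+1+1)) (q (k+1+1) - q (k+1))
    have he : (Λ.mulVec (u (k+1+1)) - q (k+1+1)) + (q (k+1+1) - q (k+1))
        = Λ.mulVec (u (k+1+1)) - q (k+1) := by module
    rw [he] at hid
    have hc := hcons k
    have hd := dotR_nonneg (Λ.mulVec (u (k+1+1)) - q (k+1+1))
    linarith
  have hA2vec' : Tendsto (fun k => Λ.mulVec (u (k+1+1)) - q (k+1+1)) atTop (nhds 0) :=
    tendsto_of_dotR_self (by
      simpa using squeeze_zero (fun k => dotR_nonneg _) hbound2 hEshift)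
  have hAq : Tendsto (fun k => Λ.mulVec (u k) - q k) atTop (nhds 0) :=
    (tendsto_add_atTop_iff_nat 2).mp hA2vec'
  have hDq : Tendsto (fun k => q (k+1) - q k) atTop (nhds 0) :=
    (tendsto_add_atTop_iff_nat 1).mp (tendsto_of_dotR_self (by
      simpa using squeeze_zero (fun k => dotR_nonneg _) hbound3 hEshift))
  have hA2vec : Tendsto (fun k => Λ.mulVec (u (k+1)) - q (k+1)) atTop (nhds 0) :=
    (tendsto_add_atTop_iff_nat 1).mpr hAq
  have hDσ : Tendsto (fun k => σ (k+1) - σ k) atTop (nhds 0) := by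
    have he : (fun k => σ (k+1) - σ k) = fun k => r • (Λ.mulVec (u (k+1)) - q (k+1)) :=
      funext fun k => by rw [hσ k]; module
    rw [he]
    simpa using hA2vec.const_smul r
  -- boundedness and subsequence extraction
  have hLle : ∀ k, L k ≤ L 0 := fun k => hanti (Nat.zero_le k)
  set R : ℝ := max (Real.sqrt (L 0 / r^2) + ‖Λ.mulVec us‖) (Real.sqrt (L 0) + ‖σs‖) with hRdef
  have hmemball : ∀ k : ℕ, (fun k => (q k, σ k)) k
      ∈ Metric.closedBall (0 : (Fin m → ℝ) × (Fin m → ℝ)) R := by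
    intro k
    rw [Metric.mem_closedBall, dist_zero_right, Prod.norm_def]
    have h1 : dotR (q k - Λ.mulVec us) (q k - Λ.mulVec us) ≤ L 0 / r^2 := by
      rw [le_div_iff₀ hr2]
      have := hLle k
      have h2 := dotR_nonneg (σ k - σs)
      simp only [hLdef] at this ⊢
      linarith
    have h2 : dotR (σ k - σs) (σ k - σs) ≤ L 0 := by
      have := hLle k
      have h3 := mul_nonneg (sq_nonneg r) (dotR_nonneg (q k - Λ.mulVec us))
      simp only [hLdef] at this ⊢
      linarith
    have hq1 : ‖q k‖ ≤ Real.sqrt (L 0 / r^2) + ‖Λ.mulVec us‖ := by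
      have ha : ‖q k‖ ≤ ‖q k - Λ.mulVec us‖ + ‖Λ.mulVec us‖ := by
        simpa using norm_add_le (q k - Λ.mulVec us) (Λ.mulVec us)
      have hb := (norm_le_sqrt_dotR (q k - Λ.mulVec us)).trans (Real.sqrt_le_sqrt h1)
      linarith
    have hσ1 : ‖σ k‖ ≤ Real.sqrt (L 0) + ‖σs‖ := by
      have ha : ‖σ k‖ ≤ ‖σ k - σs‖ + ‖σs‖ := by
        simpa using norm_add_le (σ k - σs) σs
      have hb := (norm_le_sqrt_dotR (σ k - σs)).trans (Real.sqrt_le_sqrt h2)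
      linarith
    exact max_le (hq1.trans (le_max_left _ _)) (hσ1.trans (le_max_right _ _))
  obtain ⟨⟨qb, σb⟩, -, φ, hφmono, hφtend⟩ :=
    (isCompact_closedBall (0 : (Fin m → ℝ) × (Fin m → ℝ)) R).tendsto_subseq hmemball
  have hφat : Tendsto φ atTop atTop := hφmono.tendsto_atTop
  have hqφ : Tendsto (fun j => q (φ j)) atTop (nhds qb) := by
    have := (continuous_fst.tendsto ((qb, σb) : (Fin m → ℝ) × (Fin m → ℝ))).comp hφtend
    simpa [Function.comp_def] using this
  have hσφ : Tendsto (fun j => σ (φ j)) atTop (nhds σb) := by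
    have := (continuous_snd.tendsto ((qb, σb) : (Fin m → ℝ) × (Fin m → ℝ))).comp hφtend
    simpa [Function.comp_def] using this
  have hqφ1 : Tendsto (fun j => q (φ j + 1)) atTop (nhds qb) := by
    have h1 : Tendsto (fun j => q (φ j + 1) - q (φ j)) atTop (nhds 0) := by
      have := hDq.comp hφat
      simpa [Function.comp_def] using this
    have := h1.add hqφ
    simpa using this
  have hσφ1 : Tendsto (fun j => σ (φ j + 1)) atTop (nhds σb) := by
    have h1 : Tendsto (fun j => σ (φ j + 1) - σ (φ j)) atTop (nhds 0) := by
      have := hDσ.comp hφat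
      simpa [Function.comp_def] using this
    have := h1.add hσφ
    simpa using this
  have hEφ : Tendsto (fun j => Λ.mulVec (u (φ j + 1)) - q (φ j)) atTop (nhds 0) := by
    have := hEvec.comp hφat
    simpa [Function.comp_def] using this
  have hΛuφ : Tendsto (fun j => Λ.mulVec (u (φ j + 1))) atTop (nhds qb) := by
    have := hEφ.add hqφ
    simpa using this
  have hwφ : Tendsto (fun j => σ (φ j) + r • (Λ.mulVec (u (φ j + 1)) - q (φ j)))
      atTop (nhds σb) := by
    have := hσφ.add (hEφ.const_smul r)
    simpa using this
  -- the limit point ub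
  have hker : LinearMap.ker Λ.mulVecLin = ⊥ :=
    LinearMap.ker_eq_bot.mpr (fun a b hab => hΛ (by simpa using hab))
  have hemb : Topology.IsClosedEmbedding ⇑Λ.mulVecLin := LinearMap.isClosedEmbedding_of_injective hker
  have hmemrange : qb ∈ Set.range ⇑Λ.mulVecLin :=
    hemb.isClosed_range.mem_of_tendsto hΛuφ
      (Filter.Eventually.of_forall fun j => ⟨u (φ j + 1), Matrix.mulVecLin_apply _ _⟩)
  obtain ⟨ub, hub⟩ := hmemrange
  have hub' : Λ.mulVec ub = qb := by rw [← Matrix.mulVecLin_apply]; exact hub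
  have huφ : Tendsto (fun j => u (φ j + 1)) atTop (nhds ub) := by
    rw [hemb.isEmbedding.tendsto_nhds_iff]
    have he2 : ⇑Λ.mulVecLin ∘ (fun j => u (φ j + 1)) = fun j => Λ.mulVec (u (φ j + 1)) :=
      funext fun j => Matrix.mulVecLin_apply _ _
    rw [he2, Matrix.mulVecLin_apply, hub']
    exact hΛuφ
  -- extremality of the limit pair
  have hcontT : Continuous (fun v : Fin m → ℝ => Λ.transpose.mulVec v) := by
    have he : (fun v : Fin m → ℝ => Λ.transpose.mulVec v) = ⇑(Λ.transpose.mulVecLin) :=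
      funext fun v => (Matrix.mulVecLin_apply _ _).symm
    rw [he]
    exact LinearMap.continuous_of_finiteDimensional _
  have hξtend : Tendsto (fun j =>
      -(Λ.transpose.mulVec (σ (φ j) + r • (Λ.mulVec (u (φ j + 1)) - q (φ j)))))
      atTop (nhds (-(Λ.transpose.mulVec σb))) := by
    have := ((hcontT.tendsto σb).comp hwφ).neg
    simpa [Function.comp_def] using this
  have hFbar : InSubdiff F ub (-(Λ.transpose.mulVec σb)) :=
    limit_sub F hFlsc hFproper.1 ⟨us, hFs.1⟩ _ _ ub (-(Λ.transpose.mulVec σb))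
      huφ hξtend (fun j => hFu (φ j))
  have hGbar : InSubdiff Gs (Λ.mulVec ub) σb := by
    rw [hub']
    exact limit_sub Gs hGlsc hGproper.1 ⟨Λ.mulVec us, hGs.1⟩ _ _ qb σb
      hqφ1 hσφ1 (fun j => hGq (φ j))
  -- Lyapunov functional w.r.t. (ub, σb)
  set L' : ℕ → ℝ := fun k => dotR (σ k - σb) (σ k - σb)
      + r^2 * dotR (q k - Λ.mulVec ub) (q k - Λ.mulVec ub) with hL'def
  have hstep' : ∀ k, L' (k+1) ≤ L' k := by
    intro k
    have h := lyap_step F Gs Λ r hr u q σ hσ ub σb hFbar hGbar hFu hGq k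
    have h2 := mul_nonneg (sq_nonneg r) (dotR_nonneg (Λ.mulVec (u (k+1)) - q k))
    simp only [hL'def]
    linarith
  have hL'nn : ∀ k, 0 ≤ L' k := fun k =>
    add_nonneg (dotR_nonneg _) (mul_nonneg (sq_nonneg r) (dotR_nonneg _))
  have hanti' : Antitone L' := antitone_nat_of_succ_le hstep'
  have hbdd' : BddBelow (Set.range L') := ⟨0, by rintro x ⟨k, rfl⟩; exact hL'nn k⟩
  have hL'tend : Tendsto L' atTop (nhds (⨅ k, L' k)) := tendsto_atTop_ciInf hanti' hbdd'
  have hσd : Tendsto (fun j => σ (φ j) - σb) atTop (nhds 0) := by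
    have := hσφ.sub (tendsto_const_nhds (x := σb) (f := atTop (α := ℕ)))
    simpa using this
  have hqd : Tendsto (fun j => q (φ j) - Λ.mulVec ub) atTop (nhds 0) := by
    rw [hub']
    have := hqφ.sub (tendsto_const_nhds (x := qb) (f := atTop (α := ℕ)))
    simpa using this
  have hL'φ : Tendsto (fun j => L' (φ j)) atTop (nhds 0) := by
    have := (tendsto_dotR hσd hσd).add ((tendsto_dotR hqd hqd).const_mul (r^2))
    simp only [dotR_zero] at this
    simp only [hL'def]
    simpa using this
  have hinf0 : (⨅ k, L' k) = 0 :=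
    tendsto_nhds_unique (hL'tend.comp hφat) (by simpa [Function.comp_def] using hL'φ)
  have hL'0 : Tendsto L' atTop (nhds 0) := hinf0 ▸ hL'tend
  -- conclusion
  have hσtend : Tendsto σ atTop (nhds σb) := by
    apply tendsto_of_dotR_self
    apply squeeze_zero (fun k => dotR_nonneg _) (fun k => ?_) hL'0
    have h2 := mul_nonneg (sq_nonneg r) (dotR_nonneg (q k - Λ.mulVec ub))
    simp only [hL'def]
    linarith
  have hqtend : Tendsto q atTop (nhds (Λ.mulVec ub)) := by
    apply tendsto_of_dotR_self
    apply squeeze_zero (fun k => dotR_nonneg _) (fun k => ?_) (by simpa using hL'0.div_const (r^2))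
    rw [le_div_iff₀ hr2]
    have h2 := dotR_nonneg (σ k - σb)
    simp only [hL'def]
    linarith
  have hΛutend : Tendsto (fun k => Λ.mulVec (u k)) atTop (nhds (Λ.mulVec ub)) := by
    have := hAq.add hqtend
    simpa using this
  have hutend : Tendsto u atTop (nhds ub) := by
    rw [hemb.isEmbedding.tendsto_nhds_iff]
    have he2 : ⇑Λ.mulVecLin ∘ u = fun k => Λ.mulVec (u k) :=
      funext fun k => Matrix.mulVecLin_apply _ _
    rw [he2, Matrix.mulVecLin_apply]
    exact hΛutend
  exact ⟨ub, σb, hFbar, hGbar, hutend, hqtend, hσtend⟩
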